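/- If G is a connected (P2 + 2P1)-free finite simple graph, then every vertex of G of maximum degree lies on every longest path of G (i.e., every vertex of degree Δ(G) is a Gallai vertex). -/

import Mathlib

open SimpleGraph

/-- `p` is a longest path in the graph `G`. -/
def IsLongestPath {V : Type} (G : SimpleGraph V) {u v : V} (p : G.Walk u v) : Prop :=
  p.IsPath ∧ ∀ (a b : V) (q : G.Walk a b), q.IsPath → q.length ≤ p.length

/-- The graph `P₂ + 2P₁`: the disjoint union of a single edge and two isolated
vertices. -/
def P2plus2P1 : SimpleGraph (Fin 4) := fromEdgeSet {s(0, 1)}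

lemma head?_take' {α : Type*} {l : List α} {m : ℕ} (hm : m ≠ 0) : (l.take m).head? = l.head? := by
  cases l with
  | nil => simp
  | cons a t =>
    cases m with
    | zero => exact absurd rfl hm
    | succ m => simp [List.take_succ_cons]

lemma exists_walk_of_chain' {V : Type} (G : SimpleGraph V) :
    ∀ (l : List V) (x y : V), l.Chain' G.Adj → l.head? = some x → l.getLast? = some y →
      ∃ w : G.Walk x y, w.support = l
  | [], x, y, _, hx, _ => by simp at hx
  | [c], x, y, _, hx, hy => by
    simp at hx hy
    subst hx; subst hy
    exact ⟨Walk.nil, rfl⟩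
  | c :: c' :: t, x, y, hc, hx, hy => by
    simp only [List.head?_cons, Option.some_inj] at hx
    subst hx
    rw [List.Chain', List.isChain_cons_cons] at hc
    have hy' : (c' :: t).getLast? = some y := by
      rwa [List.getLast?_cons_cons] at hy
    obtain ⟨w, hw⟩ := exists_walk_of_chain' G (c' :: t) c' y hc.2 rfl hy'
    exact ⟨Walk.cons hc.1 w, by simp [hw]⟩

lemma no_config {V : Type} {G : SimpleGraph V} (hfree : IsEmpty (P2plus2P1 ↪g G))
    {a b c d : V} (hab : G.Adj a b) (hac : ¬G.Adj a c) (had : ¬G.Adj a d)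
    (hbc : ¬G.Adj b c) (hbd : ¬G.Adj b d) (hcd : ¬G.Adj c d)
    (hac' : a ≠ c) (had' : a ≠ d) (hbc' : b ≠ c) (hbd' : b ≠ d) (hcd' : c ≠ d) : False := by
  have hab' : a ≠ b := hab.ne
  apply hfree.false
  refine ⟨⟨![a,b,c,d], ?_⟩, ?_⟩
  · intro i j hij
    fin_cases i <;> fin_cases j <;>
      simp_all [Matrix.cons_val_zero, Matrix.cons_val_one, Matrix.head_cons]
  · intro i j
    change G.Adj (![a,b,c,d] i) (![a,b,c,d] j) ↔ P2plus2P1.Adj i j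
    have hca : ¬G.Adj c a := fun h => hac h.symm
    have hda : ¬G.Adj d a := fun h => had h.symm
    have hcb : ¬G.Adj c b := fun h => hbc h.symm
    have hdb : ¬G.Adj d b := fun h => hbd h.symm
    have hdc : ¬G.Adj d c := fun h => hcd h.symm
    have hba : G.Adj b a := hab.symm
    fin_cases i <;> fin_cases j <;>
      simp_all [P2plus2P1, SimpleGraph.fromEdgeSet_adj, Sym2.eq_iff]

/-- In a connected `(P₂ + 2P₁)`-free graph, every vertex of maximum degree lies on
every longest path. -/
theorem gallai_of_P2_2P1_free {V : Type} [Fintype V] (G : SimpleGraph V) [DecidableRel G.Adj]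
    (hconn : G.Connected) (hfree : IsEmpty (P2plus2P1 ↪g G))
    (v : V) (hv : G.degree v = G.maxDegree)
    {a b : V} (p : G.Walk a b) (hp : IsLongestPath G p) :
    v ∈ p.support := by
  classical
  by_contra hvp
  set L : List V := p.support with hL
  have hLne : L ≠ [] := p.support_ne_nil
  have hchain : L.Chain' G.Adj := p.isChain_adj_support
  have hnodup : L.Nodup := hp.1.support_nodup
  set n : ℕ := L.length with hn
  have hlen : n = p.length + 1 := p.length_support
  have hvL : v ∉ L := hvp
  set f : ℕ → V := fun i => L.getD i v with hfdef
  have hfget : ∀ {i : ℕ}, (hi : i < L.length) → f i = L[i] := by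
    intro i hi
    simp only [hfdef]
    exact L.getD_eq_getElem v hi
  have hmem : ∀ {i : ℕ}, i < n → f i ∈ L := by
    intro i hi; rw [hfget (by omega)]; exact List.getElem_mem (by omega)
  have hfne : ∀ {i : ℕ}, i < n → f i ≠ v := by
    intro i hi h; exact hvL (h ▸ hmem hi)
  have hinj : ∀ {i j : ℕ}, i < n → j < n → f i = f j → i = j := by
    intro i j hi hj hij
    rw [hfget (by omega), hfget (by omega)] at hij
    have h2 := List.nodup_iff_injective_get.mp hnodup
      (show L.get ⟨i, by omega⟩ = L.get ⟨j, by omega⟩ by simpa [List.get_eq_getElem] using hij)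
    exact Fin.mk.inj_iff.mp h2
  -- maximality, list form
  have hmax : ∀ (M : List V), M.Chain' G.Adj → M.Nodup → M ≠ [] → M.length ≤ n := by
    intro M hMc hMn hMne
    obtain ⟨w, hw⟩ := exists_walk_of_chain' G M (M.head hMne) (M.getLast hMne) hMc
      (List.head?_eq_head hMne) (M.getLast?_eq_getLast hMne)
    have hwp : w.IsPath := (Walk.isPath_def w).mpr (by rw [hw]; exact hMn)
    have h1 := hp.2 _ _ w hwp
    have hwl : w.length + 1 = M.length := by
      have h2 := w.length_support
      rw [hw] at h2
      omega

    omega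
  -- a first neighbor of v
  have hva : v ≠ a := fun h => hvL (h ▸ p.start_mem_support)
  obtain ⟨q⟩ := hconn v a
  obtain ⟨z1, hz1⟩ : ∃ z, G.Adj v z := by
    cases q with
    | nil => exact absurd rfl hva
    | cons h _ => exact ⟨_, h⟩
  have hn2 : 2 ≤ n := by
    have := hmax [v, z1] (by simp [List.Chain', hz1]) (by simp [hz1.ne]) (by simp)
    simpa using this
  have hadjc : ∀ i : ℕ, i + 1 < n → G.Adj (f i) (f (i + 1)) := by
    intro i hi
    have h1 := List.isChain_iff_getElem.mp hchain i (by omega)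
    rw [hfget (by omega), hfget (by omega)]
    simpa [List.get_eq_getElem] using h1
  have hhead : L.head? = some (f 0) := by
    rw [hfget (by omega), List.head?_eq_getElem?, List.getElem?_eq_getElem (by omega)]
  have hlast : L.getLast? = some (f (n - 1)) := by
    rw [hfget (by omega), List.getLast?_eq_getElem?]
    exact List.getElem?_eq_getElem (by omega)
  have htakelast : ∀ i : ℕ, i < n → (L.take (i + 1)).getLast? = some (f i) := by
    intro i hi
    rw [List.take_succ, List.getElem?_eq_getElem (show i < L.length by omega),
      Option.toList_some, hfget (show i < L.length by omega)]
    exact List.getLast?_concat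
  have hdrophead : ∀ i : ℕ, i < n → (L.drop i).head? = some (f i) := by
    intro i hi
    rw [List.drop_eq_getElem_cons (show i < L.length by omega)]
    simp [hfget (show i < L.length by omega)]
  have hF1a : ∀ w, w ∉ L → ¬G.Adj w (f 0) := by
    intro w hw hadj
    have hM := hmax (w :: L) ?_ (List.nodup_cons.mpr ⟨hw, hnodup⟩) (by simp)
    · simp only [List.length_cons] at hM; omega
    · refine List.isChain_cons.mpr ⟨?_, hchain⟩
      intro y hy
      rw [hhead] at hy
      simp only [Option.mem_def, Option.some_inj] at hy
      subst hy; exact hadj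
  have hF1b : ∀ w, w ∉ L → ¬G.Adj (f (n - 1)) w := by
    intro w hw hadj
    have hM := hmax (L ++ [w]) ?_ ?_ (by simp)
    · simp only [List.length_append, List.length_cons, List.length_nil] at hM; omega
    · refine List.isChain_append.mpr ⟨hchain, List.isChain_singleton w, ?_⟩
      intro x hx y hy
      rw [hlast] at hx
      simp only [Option.mem_def, Option.some_inj, List.head?_cons] at hx hy
      subst hx; subst hy; exact hadj
    · refine List.nodup_append'.mpr ⟨hnodup, List.nodup_singleton w, ?_⟩
      intro x hx hx'
      simp only [List.mem_singleton] at hx'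
      subst hx'; exact hw hx
  have hx0xk : ¬G.Adj (f 0) (f (n - 1)) := by
    intro hadj
    obtain ⟨q2⟩ := hconn v a
    obtain ⟨dart, _, hd1, hd2⟩ := q2.exists_boundary_dart {x | x ∉ L} hvL
      (by simp only [Set.mem_setOf_eq, not_not]; exact p.start_mem_support)
    have hwL : dart.toProd.1 ∉ L := hd1
    have hyL : dart.toProd.2 ∈ L := by simpa using hd2
    obtain ⟨t, ht, hty⟩ := List.mem_iff_getElem.mp hyL
    have hwy : G.Adj dart.toProd.1 (f t) := by
      rw [hfget (show t < L.length from ht), hty]; exact dart.adj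
    have hdropne : L.drop t ≠ [] := by
      apply List.ne_nil_of_length_pos
      rw [List.length_drop]; omega
    have hM := hmax (dart.toProd.1 :: (L.drop t ++ L.take t)) ?_ ?_ (by simp)
    · simp only [List.length_cons, List.length_append, List.length_drop,
        List.length_take] at hM
      omega
    · refine List.isChain_cons.mpr ⟨?_, List.isChain_append.mpr
        ⟨hchain.drop _, hchain.take _, ?_⟩⟩
      · intro y hy
        rw [List.head?_append_of_ne_nil _ hdropne, hdrophead t (by omega)] at hy
        simp only [Option.mem_def, Option.some_inj] at hy
        subst hy; exact hwy
      · intro x hx y hy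
        have hdl : (L.drop t).getLast? = some (f (n - 1)) := by
          rw [← hlast]
          conv_rhs => rw [← List.take_append_drop t L]
          rw [List.getLast?_append_of_ne_nil _ hdropne]
        rw [hdl] at hx
        simp only [Option.mem_def, Option.some_inj] at hx
        subst hx
        rcases Nat.eq_zero_or_pos t with ht0 | ht0
        · subst ht0; simp at hy
        · rw [head?_take' (by omega), hhead] at hy
          simp only [Option.mem_def, Option.some_inj] at hy
          subst hy
          exact hadj.symm
    · refine List.nodup_cons.mpr ⟨?_, ?_⟩
      · intro hmem'
        rcases List.mem_append.mp hmem' with h | h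
        · exact hwL (List.drop_subset _ _ h)
        · exact hwL (List.take_subset _ _ h)
      · have hperm : (L.drop t ++ L.take t).Perm L := by
          refine List.perm_append_comm.trans ?_
          rw [List.take_append_drop]
        exact hperm.nodup_iff.mpr hnodup
  have hNvL : ∀ z, G.Adj v z → z ∈ L := by
    intro z hz
    by_contra hzL
    have h0n : f 0 ≠ f (n - 1) := fun h => by
      have := hinj (by omega) (by omega) h; omega
    exact no_config hfree hz (hF1a v hvL) (fun h => hF1b v hvL h.symm) (hF1a z hzL)
      (fun h => hF1b z hzL h.symm) hx0xk
      (fun h => hvL (by rw [h]; exact hmem (by omega)))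
      (fun h => hvL (by rw [h]; exact hmem (by omega)))
      (fun h => hzL (by rw [h]; exact hmem (by omega)))
      (fun h => hzL (by rw [h]; exact hmem (by omega))) h0n
  have hF6 : ∀ i : ℕ, i + 1 < n → G.Adj v (f i) → G.Adj v (f (i + 1)) → False := by
    intro i hi h1 h2
    have hM := hmax (L.take (i + 1) ++ v :: L.drop (i + 1)) ?_ ?_ (by simp)
    · simp only [List.length_append, List.length_take, List.length_cons,
        List.length_drop] at hM
      omega
    · refine List.isChain_append.mpr ⟨hchain.take _, List.isChain_cons.mpr
        ⟨?_, hchain.drop _⟩, ?_⟩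
      · intro y hy
        rw [hdrophead (i + 1) (by omega)] at hy
        simp only [Option.mem_def, Option.some_inj] at hy
        subst hy; exact h2
      · intro x hx y hy
        rw [htakelast i (by omega)] at hx
        simp only [Option.mem_def, Option.some_inj, List.head?_cons] at hx hy
        subst hx; subst hy; exact h1.symm
    · refine (List.perm_middle.nodup_iff).mpr ?_
      rw [List.take_append_drop]
      exact List.nodup_cons.mpr ⟨hvL, hnodup⟩
  have hFa : ∀ i : ℕ, i + 1 < n → G.Adj v (f i) → G.Adj (f 0) (f (i + 1)) → False := by
    intro i hi h1 h2
    have htne : L.take (i + 1) ≠ [] := by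
      apply List.ne_nil_of_length_pos
      rw [List.length_take]; omega
    have hrne : (L.take (i + 1)).reverse ≠ [] := by
      simpa using htne
    have hM := hmax (v :: ((L.take (i + 1)).reverse ++ L.drop (i + 1))) ?_ ?_ (by simp)
    · simp only [List.length_cons, List.length_append, List.length_reverse,
        List.length_take, List.length_drop] at hM
      omega
    · refine List.isChain_cons.mpr ⟨?_, List.isChain_append.mpr
        ⟨List.isChain_reverse.mpr ((hchain.take _).imp fun x y h => h.symm), hchain.drop _, ?_⟩⟩
      · intro y hy
        rw [List.head?_append_of_ne_nil _ hrne, List.head?_reverse,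
          htakelast i (by omega)] at hy
        simp only [Option.mem_def, Option.some_inj] at hy
        subst hy; exact h1
      · intro x hx y hy
        rw [List.getLast?_reverse, head?_take' (by omega), hhead] at hx
        rw [hdrophead (i + 1) (by omega)] at hy
        simp only [Option.mem_def, Option.some_inj] at hx hy
        subst hx; subst hy; exact h2
    · refine List.nodup_cons.mpr ⟨?_, ?_⟩
      · intro hmem'
        rcases List.mem_append.mp hmem' with h | h
        · exact hvL (List.take_subset _ _ (List.mem_reverse.mp h))
        · exact hvL (List.drop_subset _ _ h)
      · have hperm : ((L.take (i + 1)).reverse ++ L.drop (i + 1)).Perm L := by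
          refine (((L.take (i + 1)).reverse_perm).append_right _).trans ?_
          rw [List.take_append_drop]
        exact hperm.nodup_iff.mpr hnodup
  have hFb : ∀ i j : ℕ, i < j → j + 1 < n → G.Adj v (f i) → G.Adj v (f j) →
      G.Adj (f (i + 1)) (f (j + 1)) → False := by
    intro i j hij hj h1 h2 h3
    set C : List V := (L.take (j + 1)).drop (i + 1) with hC
    have hlenC : C.length = j - i := by
      rw [hC, List.length_drop, List.length_take]; omega
    have hCne : C ≠ [] := by
      apply List.ne_nil_of_length_pos; omega
    have hCrne : C.reverse ≠ [] := by simpa using hCne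
    have hLsplit : L.take (i + 1) ++ C = L.take (j + 1) := by
      have h4 : L.take (i + 1) = (L.take (j + 1)).take (i + 1) := by
        rw [List.take_take]
        congr 1
        omega
      rw [h4, hC, List.take_append_drop]
    have hClast : C.getLast? = some (f j) := by
      have h4 := htakelast j (by omega)
      rw [← hLsplit, List.getLast?_append_of_ne_nil _ hCne] at h4
      exact h4
    have hChead : C.head? = some (f (i + 1)) := by
      have hlt : i + 1 < (L.take (j + 1)).length := by
        rw [List.length_take]; omega
      rw [hC, List.drop_eq_getElem_cons hlt]
      simp only [List.head?_cons, Option.some_inj]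
      rw [List.getElem_take, hfget (by omega)]
    have hCchain : C.Chain' G.Adj := (hchain.take _).drop _
    have hM := hmax (L.take (i + 1) ++ v :: (C.reverse ++ L.drop (j + 1))) ?_ ?_ (by simp)
    · simp only [List.length_append, List.length_take, List.length_cons,
        List.length_reverse, List.length_drop] at hM
      omega
    · refine List.isChain_append.mpr ⟨hchain.take _, List.isChain_cons.mpr
        ⟨?_, List.isChain_append.mpr
          ⟨List.isChain_reverse.mpr (hCchain.imp fun x y h => h.symm), hchain.drop _, ?_⟩⟩, ?_⟩
      · intro y hy
        rw [List.head?_append_of_ne_nil _ hCrne, List.head?_reverse, hClast] at hy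
        simp only [Option.mem_def, Option.some_inj] at hy
        subst hy; exact h2
      · intro x hx y hy
        rw [List.getLast?_reverse, hChead] at hx
        rw [hdrophead (j + 1) (by omega)] at hy
        simp only [Option.mem_def, Option.some_inj] at hx hy
        subst hx; subst hy; exact h3
      · intro x hx y hy
        rw [htakelast i (by omega)] at hx
        simp only [Option.mem_def, Option.some_inj, List.head?_cons] at hx hy
        subst hx; subst hy; exact h1.symm
    · have hperm : (L.take (i + 1) ++ v :: (C.reverse ++ L.drop (j + 1))).Perm
          (v :: L) := by
        refine List.perm_middle.trans ?_
        refine List.Perm.cons v ?_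
        refine ((C.reverse_perm.append_right _).append_left _).trans ?_
        rw [← List.append_assoc, hLsplit, List.take_append_drop]
      exact hperm.nodup_iff.mpr (List.nodup_cons.mpr ⟨hvL, hnodup⟩)
  -- the index set of neighbors of v
  set Idx : Finset ℕ := (Finset.range n).filter (fun i => G.Adj v (f i)) with hIdxdef
  have hIdxmem : ∀ i ∈ Idx, i < n ∧ G.Adj v (f i) := by
    intro i hi
    rw [hIdxdef, Finset.mem_filter, Finset.mem_range] at hi
    exact hi
  have hIdxcard : Idx.card = G.degree v := by
    rw [SimpleGraph.degree]
    apply Finset.card_bij (fun i _ => f i)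
    · intro i hi
      rw [SimpleGraph.mem_neighborFinset]
      exact (hIdxmem i hi).2
    · intro i hi j hj hij
      exact hinj (hIdxmem i hi).1 (hIdxmem j hj).1 hij
    · intro z hz
      rw [SimpleGraph.mem_neighborFinset] at hz
      obtain ⟨t, ht, hty⟩ := List.mem_iff_getElem.mp (hNvL z hz)
      refine ⟨t, ?_, ?_⟩
      · rw [hIdxdef, Finset.mem_filter, Finset.mem_range]
        refine ⟨ht, ?_⟩
        rw [hfget ht, hty]; exact hz
      · rw [hfget ht, hty]
  have hdeg1 : 1 ≤ G.degree v := (G.degree_pos_iff_exists_adj v).mpr ⟨z1, hz1⟩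
  have hIdxk : ∀ i ∈ Idx, i + 1 < n := by
    intro i hi
    obtain ⟨hi1, hi2⟩ := hIdxmem i hi
    rcases Nat.lt_or_ge (i + 1) n with h | h
    · exact h
    · exfalso
      have : i = n - 1 := by omega
      subst this
      exact hF1b v hvL hi2.symm
  set S : Finset ℕ := insert 0 (Idx.image (· + 1)) with hSdef
  have hScard : S.card = G.degree v + 1 := by
    rw [hSdef, Finset.card_insert_of_notMem (by simp), Finset.card_image_of_injective _
      (add_left_injective 1), hIdxcard]
  have hSprop : ∀ s ∈ S, s < n ∧ ¬G.Adj v (f s) := by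
    intro s hs
    rw [hSdef, Finset.mem_insert, Finset.mem_image] at hs
    rcases hs with rfl | ⟨i, hi, rfl⟩
    · exact ⟨by omega, hF1a v hvL⟩
    · exact ⟨hIdxk i hi, fun h => hF6 i (hIdxk i hi) (hIdxmem i hi).2 h⟩
  have hSindep : ∀ s ∈ S, ∀ s' ∈ S, s ≠ s' → ¬G.Adj (f s) (f s') := by
    intro s hs s' hs' hne hadj
    rw [hSdef, Finset.mem_insert, Finset.mem_image] at hs hs'
    rcases hs with rfl | ⟨i, hi, rfl⟩ <;> rcases hs' with rfl | ⟨j, hj, rfl⟩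
    · exact hne rfl
    · exact hFa j (hIdxk j hj) (hIdxmem j hj).2 hadj
    · exact hFa i (hIdxk i hi) (hIdxmem i hi).2 hadj.symm
    · have hij : i ≠ j := fun h => hne (by rw [h])
      rcases Nat.lt_or_ge i j with h | h
      · exact hFb i j h (hIdxk j hj) (hIdxmem i hi).2 (hIdxmem j hj).2 hadj
      · exact hFb j i (by omega) (hIdxk i hi) (hIdxmem j hj).2 (hIdxmem i hi).2 hadj.symm
  obtain ⟨i0, hi0⟩ : Idx.Nonempty := Finset.card_pos.mp (by omega)
  have hz0 : G.Adj v (f i0) := (hIdxmem i0 hi0).2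
  have hi0n : i0 < n := (hIdxmem i0 hi0).1
  set Bad : Finset ℕ := S.filter (fun s => ¬G.Adj (f i0) (f s)) with hBaddef
  have hBadcard : Bad.card ≤ 1 := by
    rw [Finset.card_le_one]
    intro s hs s' hs'
    by_contra hne
    rw [hBaddef, Finset.mem_filter] at hs hs'
    refine no_config hfree hz0 (hSprop s hs.1).2 (hSprop s' hs'.1).2 hs.2 hs'.2
      (hSindep s hs.1 s' hs'.1 hne) ?_ ?_ ?_ ?_ ?_
    · exact fun h => hfne (hSprop s hs.1).1 h.symm
    · exact fun h => hfne (hSprop s' hs'.1).1 h.symm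
    · exact fun h => (hSprop s hs.1).2 (h ▸ hz0)
    · exact fun h => (hSprop s' hs'.1).2 (h ▸ hz0)
    · exact fun h => hne (hinj (hSprop s hs.1).1 (hSprop s' hs'.1).1 h)
  have hGood : ∀ s ∈ S \ Bad, G.Adj (f i0) (f s) := by
    intro s hs
    rw [Finset.mem_sdiff] at hs
    by_contra h
    exact hs.2 (by rw [hBaddef, Finset.mem_filter]; exact ⟨hs.1, h⟩)
  have hGoodcard : G.degree v ≤ (S \ Bad).card := by
    have h5 := Finset.le_card_sdiff Bad S
    omega
  have hTsub : insert v ((S \ Bad).image f) ⊆ G.neighborFinset (f i0) := by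
    intro x hx
    rw [Finset.mem_insert] at hx
    rw [SimpleGraph.mem_neighborFinset]
    rcases hx with rfl | hx
    · exact hz0.symm
    · obtain ⟨s, hs, rfl⟩ := Finset.mem_image.mp hx
      exact hGood s hs
  have hTcard : G.degree v + 1 ≤ (insert v ((S \ Bad).image f)).card := by
    rw [Finset.card_insert_of_notMem ?_, Finset.card_image_of_injOn ?_]
    · omega
    · intro s hs s' hs' h
      exact hinj (hSprop s (Finset.mem_sdiff.mp hs).1).1
        (hSprop s' (Finset.mem_sdiff.mp hs').1).1 h
    · intro h
      obtain ⟨s, hs, hsv⟩ := Finset.mem_image.mp h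
      exact hfne (hSprop s (Finset.mem_sdiff.mp hs).1).1 hsv
  have hfinal := Finset.card_le_card hTsub
  have hdegi0 : G.degree (f i0) = (G.neighborFinset (f i0)).card := rfl
  have hmaxd := G.degree_le_maxDegree (f i0)
  omega
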